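/- Let G be a planar PCC graph and let Z be the number of vertices v of G whose face vector f(v) is (5,6,7) or (3,3,5,7). Then Z ≤ 210. -/

import Mathlib

/-!
We formalize finite graphs 2-cell embedded in the sphere via combinatorial maps
(rotation systems): a finite set of darts together with a vertex-rotation
permutation `σ` and a fixed-point-free edge involution `α`.  Vertices, edges
and faces are the orbits of `σ`, `α` and of the face permutation `φ = σ ∘ α`
respectively; Euler's formula `#V - #E + #F = 2` says that the underlying
closed orientable surface is the sphere.
-/

/-- A finite combinatorial map (rotation system), encoding a finite graph
2-cell embedded in a closed orientable surface. -/
structure PlaneGraph where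
  /-- the type of darts (oriented edges) -/
  D : Type
  fintypeD : Fintype D
  /-- the counterclockwise rotation of the darts around their base vertex -/
  σ : Equiv.Perm D
  /-- the involution sending a dart to the opposite dart of the same edge -/
  α : Equiv.Perm D
  α_invol : ∀ d, α (α d) = d
  α_fixfree : ∀ d, α d ≠ d

namespace PlaneGraph

variable (G : PlaneGraph)

instance : Fintype G.D := G.fintypeD

/-- The face permutation. -/
def φ : Equiv.Perm G.D := G.σ * G.α

/-- Darts based at the same vertex, i.e. in the same `σ`-orbit. -/
def vSetoid : Setoid G.D :=
  ⟨G.σ.SameCycle, ⟨fun _ => Equiv.Perm.SameCycle.refl _ _,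
    fun h => h.symm, fun h h' => h.trans h'⟩⟩

/-- Darts of the same edge, i.e. in the same `α`-orbit. -/
def eSetoid : Setoid G.D :=
  ⟨G.α.SameCycle, ⟨fun _ => Equiv.Perm.SameCycle.refl _ _,
    fun h => h.symm, fun h h' => h.trans h'⟩⟩

/-- Darts of the same face, i.e. in the same `φ`-orbit. -/
def fSetoid : Setoid G.D :=
  ⟨G.φ.SameCycle, ⟨fun _ => Equiv.Perm.SameCycle.refl _ _,
    fun h => h.symm, fun h h' => h.trans h'⟩⟩

/-- The vertices of the graph. -/
def Vertex := Quotient G.vSetoid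

/-- The edges of the graph. -/
def Edge := Quotient G.eSetoid

/-- The faces of the embedded graph. -/
def Face := Quotient G.fSetoid

noncomputable instance : Fintype G.Vertex :=
  @Quotient.fintype _ _ G.vSetoid (Classical.decRel _)

noncomputable instance : Fintype G.Edge :=
  @Quotient.fintype _ _ G.eSetoid (Classical.decRel _)

noncomputable instance : Fintype G.Face :=
  @Quotient.fintype _ _ G.fSetoid (Classical.decRel _)

/-- The base vertex of a dart. -/
def vertexOf (d : G.D) : G.Vertex := Quotient.mk G.vSetoid d

/-- The edge underlying a dart. -/
def edgeOf (d : G.D) : G.Edge := Quotient.mk G.eSetoid d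

/-- The face on the left of a dart. -/
def faceOf (d : G.D) : G.Face := Quotient.mk G.fSetoid d

open scoped Classical in
/-- The darts based at a given vertex. -/
noncomputable def dartsAt (v : G.Vertex) : Finset G.D :=
  Finset.univ.filter fun d => G.vertexOf d = v

open scoped Classical in
/-- The darts of a given face. -/
noncomputable def dartsOfFace (f : G.Face) : Finset G.D :=
  Finset.univ.filter fun d => G.faceOf d = f

open scoped Classical in
/-- The darts of a given edge. -/
noncomputable def dartsOfEdge (e : G.Edge) : Finset G.D :=
  Finset.univ.filter fun d => G.edgeOf d = e

/-- The degree of a vertex. -/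
noncomputable def degree (v : G.Vertex) : ℕ := (G.dartsAt v).card

/-- The size of a face: the number of its boundary edges, counted with
multiplicity. -/
noncomputable def faceSize (f : G.Face) : ℕ := (G.dartsOfFace f).card

/-- The multiset of faces incident to a vertex (with multiplicity). -/
noncomputable def facesAt (v : G.Vertex) : Multiset G.Face :=
  (G.dartsAt v).val.map G.faceOf

/-- The face vector of a vertex: the multiset of the sizes of the faces
incident to it (with multiplicity). -/
noncomputable def faceVector (v : G.Vertex) : Multiset ℕ :=
  (G.dartsAt v).val.map fun d => G.faceSize (G.faceOf d)

/-- The multiset of the boundary vertices of a face (with multiplicity). -/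
noncomputable def boundaryVertices (f : G.Face) : Multiset G.Vertex :=
  (G.dartsOfFace f).val.map G.vertexOf

/-- The multiset of the boundary edges of a face (with multiplicity). -/
noncomputable def boundaryEdges (f : G.Face) : Multiset G.Edge :=
  (G.dartsOfFace f).val.map G.edgeOf

/-- The side vector of an edge: the multiset of the sizes of the two faces
lying on either side of it. -/
noncomputable def sideVector (e : G.Edge) : Multiset ℕ :=
  (G.dartsOfEdge e).val.map fun d => G.faceSize (G.faceOf d)

/-- The combinatorial curvature of a vertex:
`K(v) = 1 - deg(v)/2 + ∑_{σ ∈ F(v)} 1/|σ|`. -/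
noncomputable def curvature (v : G.Vertex) : ℚ :=
  1 - (G.degree v : ℚ) / 2 + ∑ d ∈ G.dartsAt v, (1 : ℚ) / (G.faceSize (G.faceOf d))

/-- The graph is connected. -/
def Connected : Prop :=
  ∀ d d' : G.D, Relation.ReflTransGen (fun a b => G.σ a = b ∨ G.α a = b) d d'

/-- The graph has no loops. -/
def Loopless : Prop := ∀ d : G.D, G.vertexOf (G.α d) ≠ G.vertexOf d

/-- The graph has no multiple edges: an edge is determined by its two
endpoints. -/
def NoMultiEdges : Prop :=
  ∀ d d' : G.D, G.vertexOf d = G.vertexOf d' →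
    G.vertexOf (G.α d) = G.vertexOf (G.α d') → G.edgeOf d = G.edgeOf d'

/-- Euler's formula `#V - #E + #F = 2`: the graph is 2-cell embedded in the
sphere. -/
def IsSphere : Prop :=
  (Fintype.card G.Vertex : ℤ) - (Fintype.card G.Edge : ℤ) +
    (Fintype.card G.Face : ℤ) = 2

/-- The multiset of the sizes of all faces of the graph. -/
noncomputable def allFaceSizes : Multiset ℕ :=
  (Finset.univ : Finset G.Face).val.map G.faceSize

/-- `G` is a prism of some order `N`: it has `2N` vertices, two faces of size
`N` and `N` faces of size 4, and every vertex is incident to faces of sizes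
`4, 4, N`. -/
def IsPrism : Prop :=
  ∃ N : ℕ, Fintype.card G.Vertex = 2 * N ∧
    (∀ v : G.Vertex, G.faceVector v = {4, 4, N}) ∧
    G.allFaceSizes = Multiset.replicate N 4 + {N, N}

/-- `G` is an antiprism of some order `N`: it has `2N` vertices, two faces of
size `N` and `2N` faces of size 3, and every vertex is incident to faces of
sizes `3, 3, 3, N`. -/
def IsAntiprism : Prop :=
  ∃ N : ℕ, Fintype.card G.Vertex = 2 * N ∧
    (∀ v : G.Vertex, G.faceVector v = {3, 3, 3, N}) ∧
    G.allFaceSizes = Multiset.replicate (2 * N) 3 + {N, N}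

/-- A planar PCC graph: a finite simple connected planar graph, 2-cell
embedded in the sphere, which is not a prism or an antiprism, all of whose
vertices have degree at least 3 and strictly positive combinatorial
curvature. -/
def IsPCC : Prop :=
  G.Connected ∧ G.Loopless ∧ G.NoMultiEdges ∧ G.IsSphere ∧
    (∀ v : G.Vertex, 3 ≤ G.degree v) ∧
    (∀ v : G.Vertex, 0 < G.curvature v) ∧
    ¬G.IsPrism ∧ ¬G.IsAntiprism

end PlaneGraph

namespace PlaneGraph

open scoped Classical

variable (G : PlaneGraph)

lemma mem_dartsAt {v : G.Vertex} {d : G.D} : d ∈ G.dartsAt v ↔ G.vertexOf d = v := by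
  simp [dartsAt]

lemma mem_dartsOfFace {f : G.Face} {d : G.D} : d ∈ G.dartsOfFace f ↔ G.faceOf d = f := by
  simp [dartsOfFace]

lemma mem_dartsOfEdge {e : G.Edge} {d : G.D} : d ∈ G.dartsOfEdge e ↔ G.edgeOf d = e := by
  simp [dartsOfEdge]

lemma faceSize_pos (f : G.Face) : 0 < G.faceSize f := by
  induction f using Quotient.inductionOn with
  | h d =>
    refine Finset.card_pos.mpr ⟨d, ?_⟩
    refine G.mem_dartsOfFace.mpr ?_
    rfl

lemma alpha_sq : G.α * G.α = 1 := Equiv.ext fun d => G.α_invol d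

lemma dartsOfEdge_eq (d : G.D) : G.dartsOfEdge (G.edgeOf d) = {d, G.α d} := by
  ext d'
  rw [G.mem_dartsOfEdge]
  constructor
  · intro h
    have h' : G.α.SameCycle d d' := Quotient.exact' h.symm
    obtain ⟨n, hn⟩ := h'
    rcases Int.even_or_odd n with ⟨k, hk⟩ | ⟨k, hk⟩
    · have : G.α ^ n = 1 := by
        rw [hk, ← two_mul, zpow_mul]
        simp [show (G.α : Equiv.Perm G.D) ^ (2:ℤ) = 1 by
          rw [show (2:ℤ) = ((2:ℕ):ℤ) from rfl, zpow_natCast, pow_two, G.alpha_sq]]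
      simp only [this] at hn
      simp [← hn]
    · have : G.α ^ n = G.α := by
        rw [hk, zpow_add, zpow_mul]
        simp [show (G.α : Equiv.Perm G.D) ^ (2:ℤ) = 1 by
          rw [show (2:ℤ) = ((2:ℕ):ℤ) from rfl, zpow_natCast, pow_two, G.alpha_sq]]
      simp only [this] at hn
      simp [← hn]
  · intro h
    rcases Finset.mem_insert.mp h with h | h
    · rw [h]
    · rw [Finset.mem_singleton] at h
      subst h
      exact Quotient.sound' ⟨1, by simp [G.α_invol d]⟩

lemma card_dartsOfEdge (e : G.Edge) : (G.dartsOfEdge e).card = 2 := by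
  induction e using Quotient.inductionOn with
  | h d =>
    have : G.edgeOf d = Quotient.mk G.eSetoid d := rfl
    rw [← this, G.dartsOfEdge_eq]
    rw [Finset.card_insert_of_notMem (by simp [Ne.symm (G.α_fixfree d)]), Finset.card_singleton]

lemma card_darts_eq_sum_degree : Fintype.card G.D = ∑ v : G.Vertex, G.degree v := by
  classical
  rw [← Finset.card_univ]
  rw [Finset.card_eq_sum_card_fiberwise (f := G.vertexOf) (t := Finset.univ)
    (fun x _ => Finset.mem_univ _)]
  refine Finset.sum_congr rfl fun v _ => ?_
  unfold degree dartsAt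
  congr 1

lemma card_darts_eq_two_mul_edges : Fintype.card G.D = 2 * Fintype.card G.Edge := by
  classical
  rw [← Finset.card_univ]
  rw [Finset.card_eq_sum_card_fiberwise (f := G.edgeOf) (t := Finset.univ)
    (fun x _ => Finset.mem_univ _)]
  have : ∀ e : G.Edge, (Finset.univ.filter fun x => G.edgeOf x = e).card = 2 := by
    intro e
    have h := G.card_dartsOfEdge e
    unfold dartsOfEdge at h
    convert h using 2
  rw [Finset.sum_congr rfl fun e _ => this e]
  simp [Finset.card_univ, mul_comm]

lemma sum_over_darts (gg : G.D → ℚ) :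
    ∑ v : G.Vertex, ∑ d ∈ G.dartsAt v, gg d = ∑ d : G.D, gg d := by
  classical
  rw [← Finset.sum_fiberwise_of_maps_to (g := G.vertexOf) (fun x _ => Finset.mem_univ _) gg]
  refine Finset.sum_congr rfl fun v _ => ?_
  apply Finset.sum_congr _ fun _ _ => rfl
  unfold dartsAt
  congr 1

lemma sum_over_darts_faces (gg : G.D → ℚ) :
    ∑ f : G.Face, ∑ d ∈ G.dartsOfFace f, gg d = ∑ d : G.D, gg d := by
  classical
  rw [← Finset.sum_fiberwise_of_maps_to (g := G.faceOf) (fun x _ => Finset.mem_univ _) gg]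
  refine Finset.sum_congr rfl fun v _ => ?_
  apply Finset.sum_congr _ fun _ _ => rfl
  unfold dartsOfFace
  congr 1

lemma gauss_bonnet :
    ∑ v : G.Vertex, G.curvature v =
      (Fintype.card G.Vertex : ℚ) - (Fintype.card G.Edge : ℚ) + (Fintype.card G.Face : ℚ) := by
  classical
  unfold curvature
  rw [Finset.sum_add_distrib, Finset.sum_sub_distrib]
  have h1 : ∑ _v : G.Vertex, (1:ℚ) = (Fintype.card G.Vertex : ℚ) := by
    simp [Finset.card_univ]
  have h2 : ∑ v : G.Vertex, (G.degree v : ℚ) / 2 = (Fintype.card G.Edge : ℚ) := by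
    rw [← Finset.sum_div]
    rw [← Nat.cast_sum, ← G.card_darts_eq_sum_degree, G.card_darts_eq_two_mul_edges]
    push_cast
    ring
  have h3 : ∑ v : G.Vertex, ∑ d ∈ G.dartsAt v, (1:ℚ) / (G.faceSize (G.faceOf d)) =
      (Fintype.card G.Face : ℚ) := by
    rw [G.sum_over_darts, ← G.sum_over_darts_faces]
    have key : ∀ f : G.Face, ∑ d ∈ G.dartsOfFace f, (1:ℚ)/(G.faceSize (G.faceOf d)) = 1 := by
      intro f
      have h : ∀ d ∈ G.dartsOfFace f, (1:ℚ) / (G.faceSize (G.faceOf d)) = 1 / (G.faceSize f) :=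
        fun d hd => by rw [G.mem_dartsOfFace.mp hd]
      rw [Finset.sum_congr rfl h, Finset.sum_const]
      have hpos := G.faceSize_pos f
      have hpos' : (0:ℚ) < (G.faceSize f : ℚ) := by exact_mod_cast hpos
      unfold faceSize at *
      rw [nsmul_eq_mul]
      field_simp
    rw [Finset.sum_congr rfl fun f _ => key f]
    simp [Finset.card_univ]
  rw [h1, h2, h3]

end PlaneGraph

namespace PlaneGraph

variable (G : PlaneGraph)

lemma degree_eq_card_faceVector (v : G.Vertex) : (G.faceVector v).card = G.degree v := by
  unfold faceVector degree
  rw [Multiset.card_map]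
  rfl

lemma sum_inv_faceSizes (v : G.Vertex) :
    ∑ d ∈ G.dartsAt v, (1:ℚ)/(G.faceSize (G.faceOf d)) =
      (Multiset.map (fun n : ℕ => (1:ℚ)/(n:ℚ)) (G.faceVector v)).sum := by
  unfold faceVector
  rw [Multiset.map_map]
  rfl

lemma curvature_567 {v : G.Vertex} (h : G.faceVector v = {5,6,7}) :
    G.curvature v = 1/105 := by
  unfold curvature
  rw [G.sum_inv_faceSizes, ← G.degree_eq_card_faceVector, h]
  simp
  norm_num

lemma curvature_3357 {v : G.Vertex} (h : G.faceVector v = {3,3,5,7}) :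
    G.curvature v = 1/105 := by
  unfold curvature
  rw [G.sum_inv_faceSizes, ← G.degree_eq_card_faceVector, h]
  simp
  norm_num

end PlaneGraph



/-- In a planar PCC graph, the number of vertices whose
face vector is `(5,6,7)` or `(3,3,5,7)` is at most 210. -/
theorem pcc_card_delta_vertices_le_210 (G : PlaneGraph) (hG : G.IsPCC) :
    {v : G.Vertex | G.faceVector v = {5, 6, 7} ∨
      G.faceVector v = {3, 3, 5, 7}}.ncard ≤ 210 := by
  classical
  obtain ⟨-, -, -, hsph, -, hpos, -, -⟩ := hG
  have h2 : ∑ v : G.Vertex, G.curvature v = 2 := by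
    rw [G.gauss_bonnet]
    exact_mod_cast congrArg (fun z : ℤ => (z : ℚ)) hsph
  set S : Finset G.Vertex := Finset.univ.filter
    (fun v => G.faceVector v = {5,6,7} ∨ G.faceVector v = {3,3,5,7}) with hS
  have hset : {v : G.Vertex | G.faceVector v = {5, 6, 7} ∨
      G.faceVector v = {3, 3, 5, 7}} = ↑S := by
    ext v; simp [hS]
  rw [hset, Set.ncard_coe_finset]
  have hcurv : ∀ v ∈ S, G.curvature v = 1/105 := by
    intro v hv
    rcases (Finset.mem_filter.mp hv).2 with h | h
    · exact G.curvature_567 h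
    · exact G.curvature_3357 h
  have hsum : ∑ v ∈ S, G.curvature v = S.card * (1/105) := by
    rw [Finset.sum_congr rfl hcurv, Finset.sum_const, nsmul_eq_mul]
  have hle : ∑ v ∈ S, G.curvature v ≤ 2 := by
    rw [← h2]
    exact Finset.sum_le_sum_of_subset_of_nonneg (Finset.subset_univ _)
      (fun v _ _ => (hpos v).le)
  rw [hsum] at hle
  have hc : (S.card : ℚ) ≤ 210 := by linarith
  exact_mod_cast hc
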